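/- For an integral 2×2 matrix A ∈ M₂(ℤ), A has unit stable range one if and only if det(A) ∈ {-1, 0, 1}. -/

import Mathlib

open Matrix

private lemma fin2_ext' {a b c d a' b' c' d' : ℤ} (h1 : a=a') (h2 : b=b') (h3 : c=c') (h4 : d=d') :
    !![a,b;c,d] = !![a',b';c',d'] := by subst h1; subst h2; subst h3; subst h4; rfl

private lemma sub_fin_two' (a b c d e f g h : ℤ) :
    !![a,b;c,d] - !![e,f;g,h] = !![a-e,b-f;c-g,d-h] := by
  ext i j; fin_cases i <;> fin_cases j <;> simp

private lemma unit_of_det_one' (a b c d : ℤ) (h : a*d - b*c = 1 ∨ a*d - b*c = -1) :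
    IsUnit !![a,b;c,d] := by
  rw [Matrix.isUnit_iff_isUnit_det, Matrix.det_fin_two_of, Int.isUnit_iff]
  rcases h with h | h <;> [left; right] <;> linarith

private lemma bezout2' (x y : ℤ) :
    ∃ p q r s : ℤ, p*s - q*r = 1 ∧ p*x + q*y = Int.gcd x y ∧ r*x + s*y = 0 := by
  rcases eq_or_ne (Int.gcd x y) 0 with h | h
  · rw [Int.gcd_eq_zero_iff] at h
    refine ⟨1,0,0,1, by ring, ?_, by simp [h.2]⟩
    rw [h.1, h.2]; norm_num
  · have hg : (Int.gcd x y : ℤ) ≠ 0 := by exact_mod_cast h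
    obtain ⟨x', hx⟩ : (Int.gcd x y : ℤ) ∣ x := Int.gcd_dvd_left x y
    obtain ⟨y', hy⟩ : (Int.gcd x y : ℤ) ∣ y := Int.gcd_dvd_right x y
    have hbez : (Int.gcd x y : ℤ) = x * Int.gcdA x y + y * Int.gcdB x y := Int.gcd_eq_gcd_ab x y
    set g : ℤ := (Int.gcd x y : ℤ) with hgdef
    set p : ℤ := Int.gcdA x y
    set q : ℤ := Int.gcdB x y
    have key : p * x' + q * y' = 1 := by
      have h2 : g * (p * x' + q * y') = g * 1 := by
        calc g * (p * x' + q * y') = (g * x') * p + (g * y') * q := by ring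
        _ = x * p + y * q := by rw [← hx, ← hy]
        _ = g * 1 := by rw [mul_one]; linarith [hbez]
      exact mul_left_cancel₀ hg h2
    refine ⟨p, q, -y', x', by linarith, ?_, by rw [hx, hy]; ring⟩
    rw [hx, hy]
    calc p*(g*x')+q*(g*y') = g*(p*x'+q*y') := by ring
      _ = g := by rw [key, mul_one]

private lemma tri_diag' : ∀ n : ℕ, ∀ a b d : ℤ, a.natAbs = n →
    ∃ P Q : Matrix (Fin 2) (Fin 2) ℤ, IsUnit P ∧ IsUnit Q ∧
      ∃ e f : ℤ, P * !![a,b;0,d] * Q = !![e,0;0,f] := by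
  intro n
  induction n using Nat.strong_induction_on with
  | _ n ih =>
  intro a b d ha
  rcases eq_or_ne a 0 with rfl | ha0
  · obtain ⟨p,q,r,s,h1,h2,h3⟩ := bezout2' b d
    refine ⟨!![p,q;r,s], !![0,1;1,0], unit_of_det_one' _ _ _ _ (Or.inl h1),
      unit_of_det_one' 0 1 1 0 (by norm_num), Int.gcd b d, 0, ?_⟩
    have e1 : !![p,q;r,s] * !![0,b;0,d] = !![0, (Int.gcd b d : ℤ); 0, 0] :=
      (Matrix.mul_fin_two _ _ _ _ _ _ _ _).trans
        (fin2_ext' (by ring) (by linarith) (by ring) (by linarith))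
    rw [e1, Matrix.mul_fin_two]
    exact fin2_ext' (by ring) (by ring) (by ring) (by ring)
  · set k : ℤ := b / a with hk
    set t : ℤ := b % a with ht
    have hbt : a * (-k) + b * 1 = t := by
      rw [ht, Int.emod_def]; ring
    have h1 : !![a,b;0,d] * !![1,-k;0,1] = !![a, t; 0, d] :=
      (Matrix.mul_fin_two _ _ _ _ _ _ _ _).trans
        (fin2_ext' (by ring) (by linarith) (by ring) (by ring))
    rcases eq_or_ne t 0 with ht0 | ht0
    · refine ⟨1, !![1,-k;0,1], isUnit_one, unit_of_det_one' 1 (-k) 0 1 (by norm_num), a, d, ?_⟩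
      rw [Matrix.one_mul, h1, ht0]
    · have htpos : 0 ≤ t := Int.emod_nonneg b ha0
      have htlt : t < |a| := by
        have := Int.emod_lt b ha0; rw [← Int.abs_eq_natAbs] at this; exact this
      have hlt : t.natAbs < n := by
        rw [← ha, Int.abs_eq_natAbs] at *; omega
      obtain ⟨p,q,u,v,hb1,hb2,hb3⟩ := bezout2' t d
      have h2 : !![a,t;0,d] * !![0,1;1,0] = !![t,a;d,0] :=
        (Matrix.mul_fin_two _ _ _ _ _ _ _ _).trans
          (fin2_ext' (by ring) (by ring) (by ring) (by ring))
      have h3 : !![p,q;u,v] * !![t,a;d,0] = !![(Int.gcd t d : ℤ), p*a; 0, u*a] :=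
        (Matrix.mul_fin_two _ _ _ _ _ _ _ _).trans
          (fin2_ext' (by linarith) (by ring) (by linarith) (by ring))
      have hglt : (Int.gcd t d : ℤ).natAbs < n := by
        have hdvd : Int.gcd t d ∣ t.natAbs := Nat.gcd_dvd_left _ _
        have hle : Int.gcd t d ≤ t.natAbs := Nat.le_of_dvd (by omega) hdvd
        simpa using lt_of_le_of_lt hle hlt
      obtain ⟨P₃, Q₃, hP₃, hQ₃, e, f, h4⟩ := ih _ hglt (Int.gcd t d : ℤ) (p*a) (u*a) rfl
      refine ⟨P₃ * !![p,q;u,v], !![1,-k;0,1] * (!![0,1;1,0] * Q₃),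
        hP₃.mul (unit_of_det_one' _ _ _ _ (Or.inl hb1)),
        ((unit_of_det_one' 1 (-k) 0 1 (by norm_num)).mul
          ((unit_of_det_one' 0 1 1 0 (by norm_num)).mul hQ₃)), e, f, ?_⟩
      calc P₃ * !![p,q;u,v] * !![a,b;0,d] * (!![1,-k;0,1] * (!![0,1;1,0] * Q₃))
          = P₃ * (!![p,q;u,v] * (!![a,b;0,d] * !![1,-k;0,1] * !![0,1;1,0])) * Q₃ := by
            simp only [Matrix.mul_assoc]
        _ = P₃ * !![(Int.gcd t d : ℤ), p*a; 0, u*a] * Q₃ := by rw [h1, h2, h3]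
        _ = !![e,0;0,f] := h4

private lemma diagonalize' (A : Matrix (Fin 2) (Fin 2) ℤ) :
    ∃ P Q : Matrix (Fin 2) (Fin 2) ℤ, IsUnit P ∧ IsUnit Q ∧
      ∃ e f : ℤ, P * A * Q = !![e,0;0,f] := by
  obtain ⟨p,q,r,s,h1,h2,h3⟩ := bezout2' (A 0 0) (A 1 0)
  have h4 : !![p,q;r,s] * A =
      !![p*(A 0 0)+q*(A 1 0), p*(A 0 1)+q*(A 1 1); 0, r*(A 0 1)+s*(A 1 1)] := by
    conv_lhs => rw [Matrix.eta_fin_two A]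
    exact (Matrix.mul_fin_two _ _ _ _ _ _ _ _).trans
      (fin2_ext' (by ring) (by ring) (by linarith) (by ring))
  obtain ⟨P₂, Q₂, hP₂, hQ₂, e, f, h5⟩ := tri_diag' _ _ _ _ rfl
  refine ⟨P₂ * !![p,q;r,s], Q₂, hP₂.mul (unit_of_det_one' _ _ _ _ (Or.inl h1)), hQ₂, e, f, ?_⟩
  calc P₂ * !![p,q;r,s] * A * Q₂ = P₂ * (!![p,q;r,s] * A) * Q₂ := by
        simp only [Matrix.mul_assoc]
    _ = !![e,0;0,f] := by rw [h4]; exact h5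

private lemma twoGood' (W : Matrix (Fin 2) (Fin 2) ℤ) :
    ∃ V₁ V₂ : Matrix (Fin 2) (Fin 2) ℤ, IsUnit V₁ ∧ IsUnit V₂ ∧ W = V₁ + V₂ := by
  obtain ⟨P, Q, hP, hQ, e, f, hd⟩ := diagonalize' W
  obtain ⟨Pu, rfl⟩ := hP
  obtain ⟨Qu, rfl⟩ := hQ
  have cancel : ∀ M : Matrix (Fin 2) (Fin 2) ℤ,
      (↑Pu⁻¹ : Matrix (Fin 2) (Fin 2) ℤ) * ((↑Pu : Matrix (Fin 2) (Fin 2) ℤ) * M *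
        (↑Qu : Matrix (Fin 2) (Fin 2) ℤ)) * (↑Qu⁻¹ : Matrix (Fin 2) (Fin 2) ℤ) = M := by
    intro M
    simp only [← Matrix.mul_assoc]
    rw [Units.inv_mul, Matrix.one_mul, Matrix.mul_assoc, Units.mul_inv, Matrix.mul_one]
  have hsum : !![e,(1:ℤ);-1,0] + !![0,-1;1,f] = !![e,0;0,f] := by
    ext i j; fin_cases i <;> fin_cases j <;> simp
  set Pi : Matrix (Fin 2) (Fin 2) ℤ := ↑Pu⁻¹ with hPi
  set Qi : Matrix (Fin 2) (Fin 2) ℤ := ↑Qu⁻¹ with hQi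
  refine ⟨Pi * !![e,1;-1,0] * Qi, Pi * !![0,-1;1,f] * Qi,
    ((Pu⁻¹.isUnit.mul (unit_of_det_one' e 1 (-1) 0 (Or.inl (by ring)))).mul Qu⁻¹.isUnit),
    ((Pu⁻¹.isUnit.mul (unit_of_det_one' 0 (-1) 1 f (Or.inl (by ring)))).mul Qu⁻¹.isUnit), ?_⟩
  have hW : W = Pi * !![e,0;0,f] * Qi := by rw [← hd]; exact (cancel W).symm
  rw [hW, ← hsum]
  simp only [Matrix.mul_add, Matrix.add_mul]

private lemma det0_case' (A P Q P' Q' X : Matrix (Fin 2) (Fin 2) ℤ) (e f : ℤ)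
    (h1 : P' * P = 1) (h2 : P * P' = 1) (h3 : Q' * Q = 1) (h4 : Q * Q' = 1)
    (hef : e = 0 ∨ f = 0) (hD : P * A * Q = !![e,0;0,f]) :
    ∃ U : Matrix (Fin 2) (Fin 2) ℤ, IsUnit U ∧ IsUnit ((U + X) * A - 1) := by
  have hQu : IsUnit Q := ⟨⟨Q, Q', h4, h3⟩, rfl⟩
  have hPu : IsUnit P := ⟨⟨P, P', h2, h1⟩, rfl⟩
  have hQ'u : IsUnit Q' := ⟨⟨Q', Q, h3, h4⟩, rfl⟩
  have hA' : A = P' * !![e,0;0,f] * Q' := by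
    rw [← hD]
    simp only [← Matrix.mul_assoc]
    rw [h1, Matrix.one_mul, Matrix.mul_assoc, h4, Matrix.mul_one]
  set Y : Matrix (Fin 2) (Fin 2) ℤ := Q' * X * P' with hY
  have c2 : ∀ Z : Matrix (Fin 2) (Fin 2) ℤ, P * (P' * Z) = Z := by
    intro Z; rw [← Matrix.mul_assoc, h2, Matrix.one_mul]
  have c4 : ∀ Z : Matrix (Fin 2) (Fin 2) ℤ, Q * (Q' * Z) = Z := by
    intro Z; rw [← Matrix.mul_assoc, h4, Matrix.one_mul]
  have key : ∀ U₀ : Matrix (Fin 2) (Fin 2) ℤ,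
      (Q * U₀ * P + X) * A - 1 = Q * ((U₀ + Y) * !![e,0;0,f] - 1) * Q' := by
    intro U₀
    rw [hA', hY]
    simp only [Matrix.add_mul, Matrix.mul_add, Matrix.sub_mul, Matrix.mul_sub,
      Matrix.mul_one, Matrix.one_mul, Matrix.mul_assoc, c2, c4, h4]
  rcases hef with he | hf
  · -- e = 0
    subst he
    set U₀ : Matrix (Fin 2) (Fin 2) ℤ := !![0,-1;1,-(Y 1 1)] with hU₀
    have hU₀u : IsUnit U₀ := unit_of_det_one' 0 (-1) 1 (-(Y 1 1)) (Or.inl (by ring))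
    have hS : U₀ + Y = !![Y 0 0, Y 0 1 - 1; Y 1 0 + 1, 0] := by
      ext i j; fin_cases i <;> fin_cases j <;> simp [hU₀] <;> ring
    have hinner : (U₀ + Y) * !![(0:ℤ),0;0,f] - 1 = !![-1, (Y 0 1 - 1)*f; 0, -1] := by
      rw [hS, Matrix.mul_fin_two, Matrix.one_fin_two, sub_fin_two']
      exact fin2_ext' (by ring) (by ring) (by ring) (by ring)
    refine ⟨Q * U₀ * P, (hQu.mul hU₀u).mul hPu, ?_⟩
    rw [key U₀, hinner]
    exact (hQu.mul (unit_of_det_one' (-1) ((Y 0 1 - 1)*f) 0 (-1) (Or.inl (by ring)))).mul hQ'u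
  · -- f = 0
    subst hf
    set U₀ : Matrix (Fin 2) (Fin 2) ℤ := !![-(Y 0 0),1;-1,0] with hU₀
    have hU₀u : IsUnit U₀ := unit_of_det_one' (-(Y 0 0)) 1 (-1) 0 (Or.inl (by ring))
    have hS : U₀ + Y = !![0, Y 0 1 + 1; Y 1 0 - 1, Y 1 1] := by
      ext i j; fin_cases i <;> fin_cases j <;> simp [hU₀] <;> ring
    have hinner : (U₀ + Y) * !![e,0;0,(0:ℤ)] - 1 = !![-1, 0; (Y 1 0 - 1)*e, -1] := by
      rw [hS, Matrix.mul_fin_two, Matrix.one_fin_two, sub_fin_two']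
      exact fin2_ext' (by ring) (by ring) (by ring) (by ring)
    refine ⟨Q * U₀ * P, (hQu.mul hU₀u).mul hPu, ?_⟩
    rw [key U₀, hinner]
    exact (hQu.mul (unit_of_det_one' (-1) 0 ((Y 1 0 - 1)*e) (-1) (Or.inl (by ring)))).mul hQ'u

theorem stmt16 (A : Matrix (Fin 2) (Fin 2) ℤ) :
    (∀ X : Matrix (Fin 2) (Fin 2) ℤ, ∃ U : Matrix (Fin 2) (Fin 2) ℤ,
      IsUnit U ∧ IsUnit ((U + X) * A - 1)) ↔ A.det ∈ ({-1, 0, 1} : Set ℤ) := by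
  constructor
  · intro h
    by_contra hmem
    simp only [Set.mem_insert_iff, Set.mem_singleton_iff] at hmem
    push_neg at hmem
    obtain ⟨hd1, hd0, hd2⟩ := hmem
    obtain ⟨U, hU, hV⟩ := h ((3:ℤ) • A.adjugate)
    set d : ℤ := A.det with hd
    have hXA : ((3:ℤ) • A.adjugate) * A = (3*d) • (1 : Matrix (Fin 2) (Fin 2) ℤ) := by
      rw [Matrix.smul_mul, Matrix.adjugate_mul, smul_smul]
    have hVe : (U + (3:ℤ) • A.adjugate) * A - 1 = U * A + (3*d) • 1 - 1 := by
      rw [Matrix.add_mul, hXA]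
    set W : Matrix (Fin 2) (Fin 2) ℤ := U * A with hW
    have hdU : U.det = 1 ∨ U.det = -1 :=
      Int.isUnit_iff.mp ((Matrix.isUnit_iff_isUnit_det U).mp hU)
    have hdV : ((U + (3:ℤ) • A.adjugate) * A - 1).det = 1 ∨
        ((U + (3:ℤ) • A.adjugate) * A - 1).det = -1 :=
      Int.isUnit_iff.mp ((Matrix.isUnit_iff_isUnit_det _).mp hV)
    have hdW : W 0 0 * W 1 1 - W 0 1 * W 1 0 = U.det * d := by
      rw [← Matrix.det_fin_two W, hW, Matrix.det_mul]
    have e2 : ((U + (3:ℤ) • A.adjugate) * A - 1).det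
        = (W 0 0 + (3*d-1)) * (W 1 1 + (3*d-1)) - W 0 1 * W 1 0 := by
      have hone : ((3*d) • (1 : Matrix (Fin 2) (Fin 2) ℤ)) = !![3*d,0;0,3*d] := by
        ext i j
        fin_cases i <;> fin_cases j <;>
          simp only [Matrix.smul_apply, Matrix.one_apply, smul_eq_mul, Matrix.cons_val',
            Matrix.cons_val_zero, Matrix.cons_val_one, Matrix.head_cons, Matrix.head_fin_const,
            Matrix.empty_val', Matrix.cons_val_fin_one, Matrix.of_apply] <;> norm_num
      have hmat : W + (3*d) • (1 : Matrix (Fin 2) (Fin 2) ℤ) - 1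
          = !![W 0 0 + (3*d-1), W 0 1; W 1 0, W 1 1 + (3*d-1)] := by
        rw [hone]
        conv_lhs => rw [Matrix.eta_fin_two W]
        ext i j
        fin_cases i <;> fin_cases j <;>
          simp [Matrix.one_apply] <;> try ring
      rw [hVe, hmat, Matrix.det_fin_two_of]
    have hdvd : (3*d - 1) ∣ (((U + (3:ℤ) • A.adjugate) * A - 1).det - U.det * d) := by
      refine ⟨W 0 0 + W 1 1 + (3*d - 1), ?_⟩
      rw [e2]
      linear_combination hdW
    rcases hdU with hu | hu <;> rcases hdV with hv' | hv' <;> rw [hu, hv'] at hdvd <;>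
      · have h1 := Int.natAbs_dvd_natAbs.mpr hdvd
        have h2 := Nat.le_of_dvd (by omega) h1
        omega
  · intro hmem X
    simp only [Set.mem_insert_iff, Set.mem_singleton_iff] at hmem
    have hcase : A.det = 0 ∨ IsUnit A := by
      rcases hmem with h | h | h
      · exact Or.inr ((Matrix.isUnit_iff_isUnit_det A).mpr (Int.isUnit_iff.mpr (Or.inr h)))
      · exact Or.inl h
      · exact Or.inr ((Matrix.isUnit_iff_isUnit_det A).mpr (Int.isUnit_iff.mpr (Or.inl h)))
    rcases hcase with hdet | hA
    · obtain ⟨P, Q, hP, hQ, e, f, hPAQ⟩ := diagonalize' A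
      obtain ⟨Pu, rfl⟩ := hP
      obtain ⟨Qu, rfl⟩ := hQ
      have hef : e = 0 ∨ f = 0 := by
        have h1 : ((Pu : Matrix (Fin 2) (Fin 2) ℤ) * A * (Qu : Matrix (Fin 2) (Fin 2) ℤ)).det
            = e * f := by rw [hPAQ, Matrix.det_fin_two_of]; ring
        rw [Matrix.det_mul, Matrix.det_mul, hdet, mul_zero, zero_mul] at h1
        exact mul_eq_zero.mp h1.symm
      exact det0_case' A ↑Pu ↑Qu ↑Pu⁻¹ ↑Qu⁻¹ X e f (Units.inv_mul Pu) (Units.mul_inv Pu)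
        (Units.inv_mul Qu) (Units.mul_inv Qu) hef hPAQ
    · obtain ⟨Au, hAu⟩ := hA
      set B : Matrix (Fin 2) (Fin 2) ℤ := ↑Au⁻¹ with hB
      have hBA : B * A = 1 := by rw [hB, ← hAu]; exact Units.inv_mul Au
      obtain ⟨V₁, V₂, hV₁, hV₂, hsum⟩ := twoGood' (B - X)
      refine ⟨V₁, hV₁, ?_⟩
      have hkey : (V₁ + X) * A - 1 = (-V₂) * A := by
        have hB' : B = V₁ + V₂ + X := by
          rw [← hsum]; abel
        calc (V₁ + X) * A - 1 = (V₁ + X) * A - B * A := by rw [hBA]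
          _ = (V₁ + X - B) * A := by rw [Matrix.sub_mul]
          _ = (-V₂) * A := by rw [hB']; congr 1; abel
      rw [hkey]
      exact hV₂.neg.mul (hAu ▸ Au.isUnit)
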